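/- arXiv:1901.02239 — 2 statements merged into one kernel-verified Lean document; each statement's English description precedes it below -/
import Mathlib

section
/- Let T ⊂ ℝⁿ be a compact C² submanifold (without boundary). Then the infimum of the lengths |q − q'| over all pairs of distinct points q, q' ∈ T such that the segment from q to q' is orthogonal to T at both endpoints (i.e. q' − q ⊥ T_qT and q' − q ⊥ T_{q'}T) is strictly positive. -/
noncomputable section

open Function

set_option maxHeartbeats 1000000

/-- A vector `v` is tangent to `T ⊆ E` at `q` if it is the velocity at `0` of a
differentiable curve in `T` through `q`. -/
def TangentAt {E : Type*} [NormedAddCommGroup E] [NormedSpace ℝ E]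
    (T : Set E) (q v : E) : Prop :=
  ∃ c : ℝ → E, (∀ t, c t ∈ T) ∧ c 0 = q ∧ HasDerivAt c v 0

/-- `T` is a C² submanifold of `ℝⁿ` (without boundary): near each of its points it is the
zero set of a C² submersion into some `ℝᵐ`. -/
def IsC2Submanifold {n : ℕ} (T : Set (EuclideanSpace ℝ (Fin n))) : Prop :=
  ∀ q ∈ T, ∃ (m : ℕ) (U : Set (EuclideanSpace ℝ (Fin n)))
    (f : EuclideanSpace ℝ (Fin n) → EuclideanSpace ℝ (Fin m)),
      IsOpen U ∧ q ∈ U ∧ ContDiff ℝ 2 f ∧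
      T ∩ U = {x ∈ U | f x = 0} ∧
      ∀ x ∈ U, Surjective (fderiv ℝ f x)

lemma tangentAt_of_mem_ker {n m : ℕ} {T U : Set (EuclideanSpace ℝ (Fin n))}
    {f : EuclideanSpace ℝ (Fin n) → EuclideanSpace ℝ (Fin m)}
    (hU : IsOpen U) (hf : ContDiff ℝ 2 f)
    (hTU : T ∩ U = {x ∈ U | f x = 0})
    {q v : EuclideanSpace ℝ (Fin n)} (hq : q ∈ T) (hqU : q ∈ U)
    (hsurj : Surjective (fderiv ℝ f q)) (hv : fderiv ℝ f q v = 0) :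
    TangentAt T q v := by
  set f' := fderiv ℝ f q with hf'
  have hfq : f q = 0 := by
    have hmem : q ∈ T ∩ U := ⟨hq, hqU⟩
    rw [hTU] at hmem
    exact hmem.2
  have hstrict : HasStrictFDerivAt f f' q :=
    hf.contDiffAt.hasStrictFDerivAt two_ne_zero
  have hrange : f'.range = ⊤ := LinearMap.range_eq_top.2 hsurj
  set g := hstrict.implicitFunction f f' hrange with hg
  have hg0 : g (f q) 0 = q := hstrict.implicitFunction_apply_image hrange
  have hvk : v ∈ f'.ker := hv
  set vk : f'.ker := ⟨v, hvk⟩ with hvkdef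
  have hderiv : HasStrictFDerivAt (g (f q)) f'.ker.subtypeL 0 :=
    hstrict.to_implicitFunction hrange
  set c : ℝ → EuclideanSpace ℝ (Fin n) := fun t => g (f q) (t • vk) with hc
  have hc0 : c 0 = q := by simp [hc, hg0]
  have hcd : HasDerivAt c v 0 := by
    have h1 : HasDerivAt (fun t : ℝ => t • vk) vk 0 := by
      simpa using (hasDerivAt_id (0:ℝ)).smul_const vk
    have hF : HasFDerivAt (g (f q)) f'.ker.subtypeL ((0:ℝ) • vk) := by
      rw [zero_smul]; exact hderiv.hasFDerivAt
    have := hF.comp_hasDerivAt 0 h1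
    exact this
  have hmap : ∀ᶠ p : (EuclideanSpace ℝ (Fin m)) × f'.ker in nhds (f q, 0),
      f (g p.1 p.2) = p.1 := hstrict.map_implicitFunction_eq hrange
  have htend : Filter.Tendsto (fun t : ℝ => ((f q, t • vk) :
      (EuclideanSpace ℝ (Fin m)) × f'.ker)) (nhds 0) (nhds (f q, 0)) := by
    refine Filter.Tendsto.prodMk_nhds tendsto_const_nhds ?_
    have : Filter.Tendsto (fun t : ℝ => t • vk) (nhds 0) (nhds ((0:ℝ) • vk)) :=
      (continuous_id.smul continuous_const).tendsto 0
    simpa using this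
  have hev1 : ∀ᶠ t : ℝ in nhds 0, f (c t) = f q := htend.eventually hmap
  have hev2 : ∀ᶠ t : ℝ in nhds 0, c t ∈ U := by
    have hcont : Filter.Tendsto c (nhds 0) (nhds q) := by
      simpa [hc0] using hcd.continuousAt.tendsto
    exact hcont.eventually (hU.eventually_mem hqU)
  have hev : ∀ᶠ t : ℝ in nhds 0, c t ∈ T := by
    filter_upwards [hev1, hev2] with t h1 h2
    have : c t ∈ {x ∈ U | f x = 0} := ⟨h2, by rw [h1, hfq]⟩
    rw [← hTU] at this
    exact this.1
  obtain ⟨δ, hδ, hδmem⟩ := Metric.eventually_nhds_iff.1 hev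
  refine ⟨fun t => if dist t 0 < δ then c t else q, fun t => ?_, ?_, ?_⟩
  · by_cases h : dist t 0 < δ
    · show (if dist t 0 < δ then c t else q) ∈ T
      rw [if_pos h]; exact hδmem h
    · show (if dist t 0 < δ then c t else q) ∈ T
      rw [if_neg h]; exact hq
  · simp [hδ, hc0]
  · refine hcd.congr_of_eventuallyEq ?_
    filter_upwards [Metric.eventually_nhds_iff.2 (⟨δ, hδ, fun {t} ht => ht⟩ :
      ∃ ε > 0, ∀ ⦃y : ℝ⦄, dist y 0 < ε → dist y 0 < δ)] with t ht
    show (if dist t 0 < δ then c t else q) = c t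
    rw [if_pos ht]

lemma local_no_chord {n : ℕ} {T : Set (EuclideanSpace ℝ (Fin n))}
    (hTsub : IsC2Submanifold T) {q₀ : EuclideanSpace ℝ (Fin n)} (hq₀ : q₀ ∈ T) :
    ∃ r > 0, ∀ q ∈ T, q ∈ Metric.ball q₀ r → ∀ q' ∈ T, q' ∈ Metric.ball q₀ r → q ≠ q' →
      (∀ v, TangentAt T q v → (inner ℝ (q' - q) v : ℝ) = 0) → False := by
  obtain ⟨m, U, f, hU, hq₀U, hf, hTU, hsurj⟩ := hTsub q₀ hq₀
  set A₀ := fderiv ℝ f q₀ with hA₀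
  have hA₀surj := hsurj q₀ hq₀U
  -- the adjoint of A₀ is injective
  have hkeradj : LinearMap.ker (ContinuousLinearMap.adjoint A₀).toLinearMap = ⊥ := by
    rw [LinearMap.ker_eq_bot']
    intro y hy
    have hz : ∀ z, (inner ℝ y z : ℝ) = 0 := by
      intro z
      obtain ⟨x, rfl⟩ := hA₀surj z
      rw [← ContinuousLinearMap.adjoint_inner_left]
      have : ContinuousLinearMap.adjoint A₀ y = 0 := hy
      rw [this, inner_zero_left]
    exact inner_self_eq_zero.1 (hz y)
  obtain ⟨K, hKpos, hanti⟩ :=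
    LinearMap.exists_antilipschitzWith (ContinuousLinearMap.adjoint A₀).toLinearMap hkeradj
  set c₀ : ℝ := (K:ℝ)⁻¹ with hc₀def
  have hc₀pos : 0 < c₀ := by positivity
  have hc₀bound : ∀ y : EuclideanSpace ℝ (Fin m),
      c₀ * ‖y‖ ≤ ‖ContinuousLinearMap.adjoint A₀ y‖ := by
    intro y
    have h1 : ‖y‖ ≤ (K:ℝ) * ‖ContinuousLinearMap.adjoint A₀ y‖ := by
      have := hanti.le_mul_dist y 0
      simpa [dist_eq_norm] using this
    rw [hc₀def, inv_mul_le_iff₀ (by exact_mod_cast hKpos)]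
    linarith [h1]
  -- continuity of the derivative near q₀
  have hcont : Continuous (fun x => fderiv ℝ f x) := hf.continuous_fderiv (by norm_num)
  obtain ⟨δ, hδpos, hδ⟩ := Metric.continuousAt_iff.1 hcont.continuousAt (c₀/8) (by positivity)
  obtain ⟨δ', hδ'pos, hδ'⟩ := Metric.isOpen_iff.1 hU q₀ hq₀U
  refine ⟨min δ δ', lt_min hδpos hδ'pos, ?_⟩
  intro q hq hqball q' hq' hq'ball hne horth
  set r := min δ δ'
  have hball_sub_U : Metric.ball q₀ r ⊆ U :=
    subset_trans (Metric.ball_subset_ball (min_le_right _ _)) hδ'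
  have hderiv_close : ∀ x ∈ Metric.ball q₀ r, ‖fderiv ℝ f x - A₀‖ < c₀/8 := by
    intro x hx
    have := hδ (lt_of_lt_of_le (Metric.mem_ball.1 hx) (min_le_left _ _))
    rwa [dist_eq_norm] at this
  set A := fderiv ℝ f q with hA
  set w := q' - q with hw
  have hwne : w ≠ 0 := sub_ne_zero.2 (Ne.symm hne)
  have hqU : q ∈ U := hball_sub_U hqball
  have hq'U : q' ∈ U := hball_sub_U hq'ball
  have hfq : f q = 0 := by
    have : q ∈ T ∩ U := ⟨hq, hqU⟩
    rw [hTU] at this; exact this.2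
  have hfq' : f q' = 0 := by
    have : q' ∈ T ∩ U := ⟨hq', hq'U⟩
    rw [hTU] at this; exact this.2
  -- w is orthogonal to ker A
  have hworth : ∀ v ∈ A.ker, (inner ℝ w v : ℝ) = 0 := fun v hv =>
    horth v (tangentAt_of_mem_ker hU hf hTU hq hqU (hsurj q hqU) hv)
  -- hence w ∈ range (adjoint A)
  have hkerA : A.ker = (ContinuousLinearMap.adjoint A).range ᗮ := by
    ext x
    simp only [LinearMap.mem_ker, Submodule.mem_orthogonal]
    constructor
    · rintro hx u ⟨y, rfl⟩
      rw [ContinuousLinearMap.coe_coe, ContinuousLinearMap.adjoint_inner_left, ← ContinuousLinearMap.coe_coe, hx, inner_zero_right]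
    · intro hx
      have := hx (ContinuousLinearMap.adjoint A (A x)) ⟨A x, rfl⟩
      rw [ContinuousLinearMap.adjoint_inner_left] at this
      exact inner_self_eq_zero.1 this
  have hwmem : w ∈ A.ker ᗮ := by
    intro u hu
    rw [real_inner_comm]
    exact hworth u hu
  obtain ⟨y, hy⟩ : ∃ y, ContinuousLinearMap.adjoint A y = w := by
    rw [hkerA, Submodule.orthogonal_orthogonal] at hwmem
    exact hwmem
  -- norm estimates
  have hAclose : ‖A - A₀‖ < c₀/8 := hderiv_close q hqball
  have hadj_norm : ‖ContinuousLinearMap.adjoint A y - ContinuousLinearMap.adjoint A₀ y‖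
      ≤ c₀/8 * ‖y‖ := by
    have h1 : ContinuousLinearMap.adjoint A y - ContinuousLinearMap.adjoint A₀ y
        = (ContinuousLinearMap.adjoint (A - A₀)) y := by
      rw [map_sub]; rfl
    rw [h1]
    calc ‖(ContinuousLinearMap.adjoint (A - A₀)) y‖
        ≤ ‖ContinuousLinearMap.adjoint (A - A₀)‖ * ‖y‖ :=
          ContinuousLinearMap.le_opNorm _ _
      _ ≤ c₀/8 * ‖y‖ := by
          have hnorm : ‖ContinuousLinearMap.adjoint (A - A₀)‖ = ‖A - A₀‖ :=
            LinearIsometryEquiv.norm_map _ _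
          rw [hnorm]
          exact mul_le_mul_of_nonneg_right hAclose.le (norm_nonneg y)
  have hylb : c₀/2 * ‖y‖ ≤ ‖w‖ := by
    have h1 := hc₀bound y
    have h2 : ‖ContinuousLinearMap.adjoint A₀ y‖ - c₀/8 * ‖y‖ ≤ ‖w‖ := by
      have := norm_sub_norm_le (ContinuousLinearMap.adjoint A₀ y)
        (ContinuousLinearMap.adjoint A₀ y - ContinuousLinearMap.adjoint A y)
      simp only [sub_sub_cancel] at this
      rw [← hy]
      have h3 : ‖ContinuousLinearMap.adjoint A₀ y - ContinuousLinearMap.adjoint A y‖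
          ≤ c₀/8 * ‖y‖ := by rw [norm_sub_rev]; exact hadj_norm
      linarith [this, h3]
    have hynn : (0:ℝ) ≤ ‖y‖ := norm_nonneg _
    nlinarith
  -- inner product identity
  have hinner : ‖w‖^2 ≤ ‖A w‖ * ‖y‖ := by
    have h1 : (inner ℝ (A w) y : ℝ) = ‖w‖^2 := by
      rw [← ContinuousLinearMap.adjoint_inner_right, hy, real_inner_self_eq_norm_sq]
    have h2 := real_inner_le_norm (A w) y
    rw [h1] at h2
    exact h2
  -- mean value estimate: ‖A w‖ ≤ c₀/4 * ‖w‖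
  have hAw : ‖A w‖ ≤ c₀/4 * ‖w‖ := by
    set g : EuclideanSpace ℝ (Fin n) → EuclideanSpace ℝ (Fin m) := fun x => f x - A x with hg
    have hdiff : ∀ x ∈ Metric.ball q₀ r, DifferentiableAt ℝ g x := fun x _ =>
      ((hf.differentiable (by norm_num)) x).sub (A.differentiable x)
    have hbound : ∀ x ∈ Metric.ball q₀ r, ‖fderiv ℝ g x‖ ≤ c₀/4 := by
      intro x hx
      have hgderiv : fderiv ℝ g x = fderiv ℝ f x - A := by
        rw [hg]
        rw [fderiv_fun_sub ((hf.differentiable (by norm_num)) x) (A.differentiable x)]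
        simp [A.fderiv]
      rw [hgderiv]
      have h1 : ‖fderiv ℝ f x - A‖ ≤ ‖fderiv ℝ f x - A₀‖ + ‖A₀ - A‖ := by
        have : fderiv ℝ f x - A = (fderiv ℝ f x - A₀) + (A₀ - A) := by abel
        rw [this]; exact norm_add_le _ _
      have h2 := hderiv_close x hx
      have h3 : ‖A₀ - A‖ < c₀/8 := by rw [norm_sub_rev]; exact hAclose
      linarith
    have := (convex_ball q₀ r).norm_image_sub_le_of_norm_fderiv_le hdiff hbound hqball hq'ball
    have hgq : g q' - g q = -(A w) := by
      rw [hg]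
      simp only [hfq, hfq', zero_sub, hw, map_sub]
      abel
    rw [show g q' - g q = g q' - g q from rfl] at this
    calc ‖A w‖ = ‖g q' - g q‖ := by rw [hgq, norm_neg]
      _ ≤ c₀/4 * ‖q' - q‖ := this
      _ = c₀/4 * ‖w‖ := by rw [hw]
  -- contradiction
  have hwpos : 0 < ‖w‖ := norm_pos_iff.2 hwne
  have hynn : (0:ℝ) ≤ ‖y‖ := norm_nonneg _
  nlinarith [hinner, hAw, hylb, hwpos, hc₀pos, hynn]

/-- Let `T ⊂ ℝⁿ` be a compact C² submanifold.  Then the infimum of the lengths `|q' − q|`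
over all pairs of distinct points `q, q' ∈ T` such that the segment from `q` to `q'` is
orthogonal to `T` at both endpoints is strictly positive. -/
theorem stmt_15 (n : ℕ) (T : Set (EuclideanSpace ℝ (Fin n)))
    (hTcpt : IsCompact T) (hTsub : IsC2Submanifold T) :
    ∃ ε : ℝ, 0 < ε ∧ ∀ q ∈ T, ∀ q' ∈ T, q ≠ q' →
      (∀ v, TangentAt T q v → (inner ℝ (q' - q) v : ℝ) = 0) →
      (∀ v, TangentAt T q' v → (inner ℝ (q' - q) v : ℝ) = 0) →
      ε ≤ ‖q' - q‖ := by
  rcases T.eq_empty_or_nonempty with hT | hTne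
  · exact ⟨1, one_pos, fun q hq => by simp [hT] at hq⟩
  have H : ∀ q (hq : q ∈ T), ∃ r > 0, ∀ a ∈ T, a ∈ Metric.ball q r →
      ∀ b ∈ T, b ∈ Metric.ball q r → a ≠ b →
      (∀ v, TangentAt T a v → (inner ℝ (b - a) v : ℝ) = 0) → False :=
    fun q hq => local_no_chord hTsub hq
  choose r hrpos hr using H
  obtain ⟨t, ht⟩ := hTcpt.elim_nhds_subcover' (fun q hq => Metric.ball q (r q hq / 2))
    (fun q hq => Metric.ball_mem_nhds _ (half_pos (hrpos q hq)))
  have htne : t.Nonempty := by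
    obtain ⟨q0, hq0⟩ := hTne
    obtain ⟨x, hx, -⟩ := Set.mem_iUnion₂.1 (ht hq0)
    exact ⟨x, hx⟩
  refine ⟨t.inf' htne (fun x => r x x.2 / 2), ?_, ?_⟩
  · rw [Finset.lt_inf'_iff]
    exact fun x hx => half_pos (hrpos x x.2)
  intro q hq q' hq' hne horth _horth'
  by_contra hlt
  push_neg at hlt
  obtain ⟨x, hxt, hqx⟩ := Set.mem_iUnion₂.1 (ht hq)
  have hεle : t.inf' htne (fun x => r x x.2 / 2) ≤ r x x.2 / 2 :=
    Finset.inf'_le _ hxt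
  have hqx' : q ∈ Metric.ball (x : EuclideanSpace ℝ (Fin n)) (r x x.2) :=
    Metric.ball_subset_ball (by linarith [hrpos x x.2]) hqx
  have hq'x : q' ∈ Metric.ball (x : EuclideanSpace ℝ (Fin n)) (r x x.2) := by
    rw [Metric.mem_ball] at hqx ⊢
    have h1 : dist q' x ≤ dist q' q + dist q x := dist_triangle _ _ _
    have h2 : dist q' q = ‖q' - q‖ := dist_eq_norm _ _
    linarith
  exact hr x x.2 q hq hqx' q' hq' hq'x hne horth
end
end

section
/- Let U ⊂ ℂ be a bounded open connected set, b₁, b₂ : U → ℝ continuous and bounded, and a : closure(U) → ℝ continuous on the closure and C² on U satisfying the elliptic equation Δa = b₁·∂a/∂x + b₂·∂a/∂y on U. Then a attains its maximum over closure(U) on the boundary ∂U: max_{closure(U)} a = max_{∂U} a. -/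
open Filter Set

noncomputable section

lemma aux_second_deriv_nonpos {g : ℝ → ℝ} {m : ℝ}
    (hdiff : ∀ᶠ t in nhds (0:ℝ), DifferentiableAt ℝ g t)
    (hmax : IsLocalMax g 0)
    (hm : HasDerivAt (deriv g) m 0) : m ≤ 0 := by
  by_contra hm0
  push_neg at hm0
  have h0 : deriv g 0 = 0 := hmax.deriv_eq_zero
  have hs : Tendsto (slope (deriv g) 0) (nhdsWithin 0 {(0:ℝ)}ᶜ) (nhds m) :=
    hasDerivAt_iff_tendsto_slope.mp hm
  have h1 : ∀ᶠ t in nhdsWithin (0:ℝ) (Ioi 0), 0 < deriv g t := by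
    have h2 : ∀ᶠ t in nhdsWithin (0:ℝ) {(0:ℝ)}ᶜ, 0 < slope (deriv g) 0 t :=
      hs.eventually (eventually_gt_nhds hm0)
    have h3 : ∀ᶠ t in nhdsWithin (0:ℝ) (Ioi 0), 0 < slope (deriv g) 0 t :=
      h2.filter_mono (nhdsWithin_mono 0 (fun t ht => ne_of_gt ht))
    filter_upwards [h3, self_mem_nhdsWithin] with t ht ht0
    have : slope (deriv g) 0 t = deriv g t / t := by
      simp [slope_def_field, h0]
    rw [this] at ht
    have := mul_pos ht (show (0:ℝ) < t from ht0)
    rwa [div_mul_cancel₀] at this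
    exact ne_of_gt ht0
  obtain ⟨u, hu, hIoo⟩ := mem_nhdsGT_iff_exists_Ioo_subset.mp h1
  obtain ⟨ε₁, hε₁, hd⟩ := Metric.eventually_nhds_iff.mp hdiff
  obtain ⟨ε₂, hε₂, hM⟩ := Metric.eventually_nhds_iff.mp hmax
  set δ := min u (min ε₁ ε₂) / 2 with hδdef
  have hupos : 0 < u := hu
  have hδpos : 0 < δ := by positivity
  have hδu : δ < u := by
    have h : δ < min u (min ε₁ ε₂) := by
      rw [hδdef]; exact half_lt_self (by positivity)
    exact lt_of_lt_of_le h (min_le_left _ _)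
  have hδ₁ : δ < ε₁ := lt_of_lt_of_le
    (by rw [hδdef]; exact half_lt_self (by positivity))
    ((min_le_right _ _).trans (min_le_left _ _))
  have hδ₂ : δ < ε₂ := lt_of_lt_of_le
    (by rw [hδdef]; exact half_lt_self (by positivity))
    ((min_le_right _ _).trans (min_le_right _ _))
  have hmono : StrictMonoOn g (Icc 0 δ) := by
    apply strictMonoOn_of_deriv_pos (convex_Icc 0 δ)
    · intro t ht
      have : DifferentiableAt ℝ g t := by
        apply hd
        rw [Real.dist_eq, sub_zero, abs_of_nonneg ht.1]
        exact lt_of_le_of_lt ht.2 hδ₁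
      exact this.continuousAt.continuousWithinAt
    · intro t ht
      rw [interior_Icc] at ht
      exact hIoo ⟨ht.1, lt_trans ht.2 hδu⟩ |>.out
  have hlt : g 0 < g δ := hmono (left_mem_Icc.mpr hδpos.le) (right_mem_Icc.mpr hδpos.le) hδpos
  have : g δ ≤ g 0 := by
    apply hM
    rw [Real.dist_eq, sub_zero, abs_of_nonneg hδpos.le]
    exact hδ₂
  linarith

lemma aux_dirderiv {ψ : ℂ → ℝ} {U : Set ℂ} (hU : IsOpen U) {z₀ : ℂ} (hz₀ : z₀ ∈ U)
    (hψ : DifferentiableOn ℝ ψ U) (v : ℂ)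
    (hF : DifferentiableAt ℝ (fun w => fderiv ℝ ψ w v) z₀) :
    (∀ᶠ t in nhds (0:ℝ), DifferentiableAt ℝ (fun t : ℝ => ψ (z₀ + t • v)) t) ∧
    HasDerivAt (deriv (fun t : ℝ => ψ (z₀ + t • v)))
      (fderiv ℝ (fun w => fderiv ℝ ψ w v) z₀ v) 0 := by
  set L : ℝ → ℂ := fun t => z₀ + t • v with hLdef
  have hL : ∀ t : ℝ, HasDerivAt L v t := by
    intro t
    have h1 : HasDerivAt (fun y : ℝ => y • v) ((1:ℝ) • v) t := (hasDerivAt_id t).smul_const v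
    simpa only [one_smul] using h1.const_add z₀
  have hL0 : L 0 = z₀ := by simp [hLdef]
  have hLcont : Continuous L := by
    have := fun t => (hL t).continuousAt
    exact continuous_iff_continuousAt.mpr this
  have hmem : ∀ᶠ t in nhds (0:ℝ), L t ∈ U := by
    have : U ∈ nhds (L 0) := hU.mem_nhds (hL0 ▸ hz₀)
    exact hLcont.continuousAt.eventually_mem this
  have key : ∀ᶠ t in nhds (0:ℝ),
      HasDerivAt (fun s : ℝ => ψ (L s)) (fderiv ℝ ψ (L t) v) t := by
    filter_upwards [hmem] with t ht
    have hψt : DifferentiableAt ℝ ψ (L t) := hψ.differentiableAt (hU.mem_nhds ht)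
    exact hψt.hasFDerivAt.comp_hasDerivAt t (hL t)
  have hdiff : ∀ᶠ t in nhds (0:ℝ), DifferentiableAt ℝ (fun t : ℝ => ψ (z₀ + t • v)) t := by
    filter_upwards [key] with t ht using ht.differentiableAt
  refine ⟨hdiff, ?_⟩
  have heq : deriv (fun t : ℝ => ψ (z₀ + t • v)) =ᶠ[nhds (0:ℝ)]
      fun t => fderiv ℝ ψ (L t) v := by
    filter_upwards [key] with t ht using ht.deriv
  have hcomp : HasDerivAt (fun t => fderiv ℝ ψ (L t) v)
      (fderiv ℝ (fun w => fderiv ℝ ψ w v) z₀ v) 0 := by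
    have h := HasFDerivAt.comp_hasDerivAt (x := (0:ℝ)) (hL0 ▸ hF.hasFDerivAt) (hL 0)
    rw [hL0] at h
    exact h
  exact hcomp.congr_of_eventuallyEq heq

/-- Weak maximum principle for `Δa = b₁·∂a/∂x + b₂·∂a/∂y`.  Let `U ⊂ ℂ` be a bounded
open connected set, `b₁, b₂ : U → ℝ` continuous and bounded, and `a` continuous on
`closure U` and C² on `U` satisfying the elliptic equation on `U` (here
`∂a/∂x = da(1)`, `∂a/∂y = da(i)`).  Then `a` attains its maximum over `closure U`
on the boundary `∂U`. -/
theorem stmt_17 (U : Set ℂ) (hUopen : IsOpen U) (hUbdd : Bornology.IsBounded U)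
    (hUconn : IsConnected U)
    (b₁ b₂ : ℂ → ℝ)
    (hb₁cont : ContinuousOn b₁ U) (hb₂cont : ContinuousOn b₂ U)
    (hbbdd : ∃ C : ℝ, ∀ z ∈ U, |b₁ z| ≤ C ∧ |b₂ z| ≤ C)
    (a : ℂ → ℝ)
    (hacont : ContinuousOn a (closure U)) (haC2 : ContDiffOn ℝ 2 a U)
    (heq : ∀ z ∈ U,
      fderiv ℝ (fun w => fderiv ℝ a w 1) z 1 +
        fderiv ℝ (fun w => fderiv ℝ a w Complex.I) z Complex.I
      = b₁ z * fderiv ℝ a z 1 + b₂ z * fderiv ℝ a z Complex.I) :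
    ∀ z ∈ closure U, a z ≤ sSup (a '' frontier U) := by
  obtain ⟨C₀, hC⟩ := hbbdd
  set C := max C₀ 0 with hCdef
  set α := C + 1 with hαdef
  have hC0 : 0 ≤ C := le_max_right _ _
  have hα : (0:ℝ) < α := by positivity
  set e : ℂ → ℝ := fun w => Real.exp (α * w.re) with hedef
  have hepos : ∀ w, 0 < e w := fun w => Real.exp_pos _
  have he1 : ∀ w : ℂ, HasFDerivAt e ((α * e w) • (Complex.reCLM : ℂ →L[ℝ] ℝ)) w := by
    intro w
    have hlin : HasFDerivAt (fun z : ℂ => α * z.re) (α • (Complex.reCLM : ℂ →L[ℝ] ℝ)) w :=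
      (Complex.reCLM.hasFDerivAt).const_mul α
    have h := hlin.exp
    rw [smul_smul, mul_comm (Real.exp (α * w.re)) α] at h
    exact h
  have hefderiv : ∀ w v : ℂ, fderiv ℝ e w v = α * e w * v.re := by
    intro w v
    rw [(he1 w).fderiv]
    simp [Complex.reCLM]
  have hKc : IsCompact (closure U) := hUbdd.isCompact_closure
  have hclne : (closure U).Nonempty := hUconn.nonempty.closure
  obtain ⟨R, hR⟩ := hUbdd.subset_closedBall 0
  have hRcl : closure U ⊆ Metric.closedBall 0 R :=
    closure_minimal hR Metric.isClosed_closedBall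
  set M := Real.exp (α * R) with hMdef
  have hM : 0 < M := Real.exp_pos _
  have heM : ∀ w ∈ closure U, e w ≤ M := by
    intro w hw
    apply Real.exp_le_exp.mpr
    apply mul_le_mul_of_nonneg_left _ hα.le
    calc w.re ≤ |w.re| := le_abs_self _
      _ ≤ ‖w‖ := Complex.abs_re_le_norm w
      _ ≤ R := by
          have := hRcl hw
          simpa [Complex.dist_eq] using Metric.mem_closedBall.mp this
  have hfrsub : frontier U ⊆ closure U := frontier_subset_closure
  have hfc : IsCompact (frontier U) := hKc.of_isClosed_subset isClosed_frontier hfrsub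
  have hbddS : BddAbove (a '' frontier U) :=
    (hfc.image_of_continuousOn (hacont.mono hfrsub)).bddAbove
  set S := sSup (a '' frontier U) with hSdef
  -- differentiability facts about a
  have haD : DifferentiableOn ℝ a U := haC2.differentiableOn (by norm_num)
  have hafC : ContDiffOn ℝ 1 (fderiv ℝ a) U := haC2.fderiv_of_isOpen hUopen (by norm_num)
  have hafD : DifferentiableOn ℝ (fderiv ℝ a) U := hafC.differentiableOn (by norm_num)
  have key : ∀ ε : ℝ, 0 < ε → ∀ z ∈ closure U, a z ≤ S + ε * M := by
    intro ε hε z hz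
    set φ : ℂ → ℝ := fun w => a w + ε * e w with hφdef
    have hecont : Continuous e := by fun_prop
    have hφcont : ContinuousOn φ (closure U) :=
      hacont.add ((continuous_const.mul hecont).continuousOn)
    obtain ⟨z₀, hz₀cl, hz₀max⟩ := hKc.exists_isMaxOn hclne hφcont
    have hz₀U : z₀ ∉ U := by
      intro hz₀U
      have hUmem : U ∈ nhds z₀ := hUopen.mem_nhds hz₀U
      have hlocmax : IsLocalMax φ z₀ :=
        Filter.eventually_of_mem hUmem (fun w hw => hz₀max (subset_closure hw))
      -- φ differentiable on U with explicit fderiv formula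
      have hφhas : ∀ w ∈ U, HasFDerivAt φ
          (fderiv ℝ a w + ε • ((α * e w) • (Complex.reCLM : ℂ →L[ℝ] ℝ))) w := by
        intro w hw
        exact ((haD.differentiableAt (hUopen.mem_nhds hw)).hasFDerivAt).add
          ((he1 w).const_mul ε)
      have hφD : DifferentiableOn ℝ φ U := fun w hw =>
        ((hφhas w hw).differentiableAt).differentiableWithinAt
      have hφfderiv : ∀ w ∈ U, ∀ v : ℂ,
          fderiv ℝ φ w v = fderiv ℝ a w v + ε * (α * e w * v.re) := by
        intro w hw v
        rw [(hφhas w hw).fderiv]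
        simp [Complex.reCLM, mul_assoc]
      -- gradient of φ at z₀ is zero
      have hφ0 : fderiv ℝ φ z₀ = 0 := hlocmax.fderiv_eq_zero
      have hgrad : ∀ v : ℂ, fderiv ℝ a z₀ v = -(ε * (α * e z₀ * v.re)) := by
        intro v
        have h := hφfderiv z₀ hz₀U v
        rw [hφ0] at h
        simp at h
        linarith
      -- fderiv φ ·  v  agrees on U with an explicit differentiable function
      have hFa : ∀ v : ℂ, DifferentiableAt ℝ (fun w => fderiv ℝ a w v) z₀ :=
        fun v => (hafD.differentiableAt hUmem).clm_apply (differentiableAt_const v)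
      have hFeq : ∀ v : ℂ, (fun w => fderiv ℝ φ w v) =ᶠ[nhds z₀]
          (fun w => fderiv ℝ a w v + ε * (α * e w * v.re)) :=
        fun v => Filter.eventually_of_mem hUmem (fun w hw => hφfderiv w hw v)
      have heD : ∀ v : ℂ, DifferentiableAt ℝ (fun w => ε * (α * e w * v.re)) z₀ := by
        intro v
        have : DifferentiableAt ℝ e z₀ := (he1 z₀).differentiableAt
        fun_prop
      have hFφ : ∀ v : ℂ, DifferentiableAt ℝ (fun w => fderiv ℝ φ w v) z₀ := by
        intro v
        exact ((hFa v).add (heD v)).congr_of_eventuallyEq (hFeq v)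
      -- the Hessian-type quantities
      have hH : ∀ v : ℂ, fderiv ℝ (fun w => fderiv ℝ φ w v) z₀ v
          = fderiv ℝ (fun w => fderiv ℝ a w v) z₀ v
            + ε * (α * v.re) * (α * e z₀ * v.re) := by
        intro v
        rw [(hFeq v).fderiv_eq]
        have h2 : (fun w => fderiv ℝ a w v + ε * (α * e w * v.re))
            = fun w => fderiv ℝ a w v + (ε * α * v.re) * e w := by
          funext w; ring
        rw [h2, fderiv_fun_add (hFa v) (by
          have : DifferentiableAt ℝ e z₀ := (he1 z₀).differentiableAt
          fun_prop)]
        have h3 : fderiv ℝ (fun w => (ε * α * v.re) * e w) z₀ v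
            = (ε * α * v.re) * fderiv ℝ e z₀ v := by
          rw [fderiv_const_mul (he1 z₀).differentiableAt]
          simp
        simp only [ContinuousLinearMap.add_apply]
        rw [h3, hefderiv]
        ring
      -- second derivative test in directions 1 and I
      have hnonpos : ∀ v : ℂ, fderiv ℝ (fun w => fderiv ℝ φ w v) z₀ v ≤ 0 := by
        intro v
        obtain ⟨hd, hder⟩ := aux_dirderiv hUopen hz₀U hφD v (hFφ v)
        apply aux_second_deriv_nonpos hd _ hder
        -- local max of t ↦ φ (z₀ + t • v) at 0
        have hLc : ContinuousAt (fun t : ℝ => z₀ + t • v) 0 := by fun_prop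
        have hten : Filter.Tendsto (fun t : ℝ => z₀ + t • v) (nhds 0) (nhds z₀) := by
          simpa using hLc.tendsto
        have h5 : ∀ᶠ t in nhds (0:ℝ), φ (z₀ + t • v) ≤ φ (z₀ + (0:ℝ) • v) := by
          simpa using hten.eventually hlocmax
        exact h5
      have hn1 := hnonpos 1
      have hnI := hnonpos Complex.I
      rw [hH 1] at hn1
      rw [hH Complex.I] at hnI
      simp only [Complex.one_re, Complex.I_re, mul_one, mul_zero, zero_mul, add_zero] at hn1 hnI
      have hheq := heq z₀ hz₀U
      have hg1 := hgrad 1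
      have hgI := hgrad Complex.I
      simp only [Complex.one_re, Complex.I_re, mul_one, mul_zero] at hg1 hgI
      rw [hg1, hgI] at hheq
      simp only [mul_neg, mul_zero, neg_zero, add_zero] at hheq
      have hb1 : b₁ z₀ ≤ C := le_trans (le_abs_self _) (le_trans (hC z₀ hz₀U).1 (le_max_left _ _))
      have hez := hepos z₀
      have hP : 0 < ε * α * e z₀ := by positivity
      have hαb : 1 ≤ α - b₁ z₀ := by
        rw [hαdef]; linarith
      have hPP : 0 < (ε * α * e z₀) * (α - b₁ z₀) := mul_pos hP (by linarith)
      nlinarith [hPP]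
    have hz₀fr : z₀ ∈ frontier U := by
      rw [frontier, hUopen.interior_eq]
      exact ⟨hz₀cl, hz₀U⟩
    have h1 : a z ≤ φ z := by
      have h6 := mul_pos hε (hepos z)
      have h7 : φ z = a z + ε * e z := rfl
      linarith
    have h2 : φ z ≤ φ z₀ := hz₀max hz
    have h3 : a z₀ ≤ S := le_csSup hbddS ⟨z₀, hz₀fr, rfl⟩
    have h4 : ε * e z₀ ≤ ε * M := mul_le_mul_of_nonneg_left (heM _ hz₀cl) hε.le
    calc a z ≤ φ z := h1
      _ ≤ φ z₀ := h2
      _ = a z₀ + ε * e z₀ := rfl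
      _ ≤ S + ε * M := add_le_add h3 h4
  intro z hz
  by_contra hlt
  push_neg at hlt
  have hk := key ((a z - S) / (2 * M)) (div_pos (by linarith) (by positivity)) z hz
  rw [div_mul_eq_mul_div, mul_comm, ← div_mul_eq_mul_div] at hk
  have : M / (2 * M) = 1/2 := by field_simp
  rw [this] at hk
  linarith
end
end
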